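/- (Spread expression) Let Γ be a constraint language over a finite domain D of size d. For every relation R of arity k that is few-definable from Γ (definable using Γ-constraints, equalities, conjunction, and both ∃ and ∀ quantifiers), there exists a pp-definable relation R' ⊆ D^(k+d) such that R is spread-expressed by R': (monotonicity) if {b₁,…,b_d} ⊇ {b'₁,…,b'_d} then R'(a,b₁,…,b_d) implies R'(a,b'₁,…,b'_d); and (expression) if {b₁,…,b_d} = D then R(a) ↔ R'(a,b₁,…,b_d). -/

import Mathlib

/-- An operation `f : D^m → D` is a polymorphism of a relation `R ⊆ D^k` if
applying `f` coordinate-wise to any `m` tuples of `R` yields a tuple of `R`. -/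
def IsPolymorphism {D : Type*} {m k : ℕ} (f : (Fin m → D) → D)
    (R : Set (Fin k → D)) : Prop :=
  ∀ ts : Fin m → Fin k → D, (∀ i, ts i ∈ R) → (fun j => f (fun i => ts i j)) ∈ R

/-- An atom of a pp-definition of a `k`-ary relation using `m` existentially
quantified variables: either a constraint `S(w₁,…,w_l)` on some of the
variables (which range over `Fin k ⊕ Fin m`), or an equality `u = v`. -/
inductive Atom (D : Type*) (k m : ℕ) where
  | rel (l : ℕ) (S : Set (Fin l → D)) (vars : Fin l → Fin k ⊕ Fin m)
  | eq (u v : Fin k ⊕ Fin m)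

/-- All relations occurring in the atom belong to the constraint language `Γ`. -/
def Atom.OverLang {D : Type*} {k m : ℕ} (Γ : Set ((l : ℕ) × Set (Fin l → D))) :
    Atom D k m → Prop
  | .rel l S _ => (⟨l, S⟩ : (l : ℕ) × Set (Fin l → D)) ∈ Γ
  | .eq _ _ => True

/-- Satisfaction of an atom under the assignment `a` to the free variables and
`b` to the existentially quantified variables. -/
def Atom.Sat {D : Type*} {k m : ℕ} (A : Atom D k m) (a : Fin k → D)
    (b : Fin m → D) : Prop :=
  match A with
  | .rel _ S vars => (fun i => Sum.elim a b (vars i)) ∈ S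
  | .eq u v => Sum.elim a b u = Sum.elim a b v

/-- `R` is pp-definable from `Γ`: `R(v₁,…,v_k) ≡ ∃x₁…∃x_m 𝒞` where `𝒞` is a
finite conjunction of constraints over relations of `Γ` and equalities. -/
def ppDefinable {D : Type*} (Γ : Set ((l : ℕ) × Set (Fin l → D))) {k : ℕ}
    (R : Set (Fin k → D)) : Prop :=
  ∃ (m : ℕ) (C : List (Atom D k m)),
    (∀ A ∈ C, Atom.OverLang Γ A) ∧
    R = {a | ∃ b : Fin m → D, ∀ A ∈ C, A.Sat a b}

/-- Semantics of a quantifier prefix: `quantSem m Q P` quantifies the `m`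
variables of `P` in order, universally where `Q` is `true` and existentially
where `Q` is `false`. -/
def quantSem {D : Type*} : (m : ℕ) → (Fin m → Bool) → ((Fin m → D) → Prop) → Prop
  | 0, _, P => P (fun i => i.elim0)
  | m + 1, Q, P =>
      if Q 0 = true then
        ∀ x : D, quantSem m (fun i => Q i.succ) (fun b => P (Fin.cons x b))
      else
        ∃ x : D, quantSem m (fun i => Q i.succ) (fun b => P (Fin.cons x b))

/-- `R` is few-definable from `Γ`: `R(v₁,…,v_k) ≡ Q₁x₁…Q_mx_m 𝒞` where each
`Q_i ∈ {∀, ∃}` and `𝒞` is a finite conjunction of constraints over relations of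
`Γ` and equalities. -/
def fewDefinable {D : Type*} (Γ : Set ((l : ℕ) × Set (Fin l → D))) {k : ℕ}
    (R : Set (Fin k → D)) : Prop :=
  ∃ (m : ℕ) (Q : Fin m → Bool) (C : List (Atom D k m)),
    (∀ A ∈ C, Atom.OverLang Γ A) ∧
    R = {a | quantSem m Q (fun b => ∀ A ∈ C, A.Sat a b)}

namespace SpreadAux

variable {D : Type*}

/-- Remap the variables of an atom. -/
def remapAtom {k m k' m' : ℕ} (ρ : Fin k ⊕ Fin m → Fin k' ⊕ Fin m') :
    Atom D k m → Atom D k' m'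
  | .rel l S vars => .rel l S (fun i => ρ (vars i))
  | .eq u v => .eq (ρ u) (ρ v)

lemma remapAtom_overLang {k m k' m' : ℕ} (Γ : Set ((l : ℕ) × Set (Fin l → D)))
    (ρ : Fin k ⊕ Fin m → Fin k' ⊕ Fin m') (A : Atom D k m) (h : A.OverLang Γ) :
    (remapAtom ρ A).OverLang Γ := by
  cases A with
  | rel l S vars => exact h
  | eq u v => trivial

lemma sat_remapAtom {k m k' m' : ℕ} (ρ : Fin k ⊕ Fin m → Fin k' ⊕ Fin m')
    (A : Atom D k m) (a' : Fin k' → D) (b' : Fin m' → D) (a : Fin k → D)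
    (b : Fin m → D) (h : ∀ v, Sum.elim a' b' (ρ v) = Sum.elim a b v) :
    (remapAtom ρ A).Sat a' b' ↔ A.Sat a b := by
  cases A with
  | rel l S vars => simp only [remapAtom, Atom.Sat, h]
  | eq u v => simp only [remapAtom, Atom.Sat, h]

lemma pp_comap {k k' : ℕ} (Γ : Set ((l : ℕ) × Set (Fin l → D)))
    (R : Set (Fin k → D)) (h : ppDefinable Γ R) (σ : Fin k → Fin k') :
    ppDefinable Γ {c : Fin k' → D | (fun i => c (σ i)) ∈ R} := by
  obtain ⟨m, C, hC, rfl⟩ := h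
  refine ⟨m, C.map (remapAtom (Sum.map σ id)), ?_, ?_⟩
  · intro A hA
    obtain ⟨A₀, h₀, rfl⟩ := List.mem_map.mp hA
    exact remapAtom_overLang Γ _ _ (hC _ h₀)
  · ext c
    simp only [Set.mem_setOf_eq]
    constructor
    · rintro ⟨b, hb⟩
      refine ⟨b, ?_⟩
      rintro A' hA'
      obtain ⟨A, hA, rfl⟩ := List.mem_map.mp hA'
      exact (sat_remapAtom (Sum.map σ id) A c b (fun i => c (σ i)) b
        (by rintro (v | v) <;> rfl)).mpr (hb _ hA)
    · rintro ⟨b, hb⟩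
      refine ⟨b, fun A hA => ?_⟩
      exact (sat_remapAtom (Sum.map σ id) A c b (fun i => c (σ i)) b
        (by rintro (v | v) <;> rfl)).mp (hb _ (List.mem_map_of_mem hA))

lemma pp_univ {k : ℕ} (Γ : Set ((l : ℕ) × Set (Fin l → D))) :
    ppDefinable Γ (Set.univ : Set (Fin k → D)) := by
  refine ⟨0, [], by simp, ?_⟩
  ext a
  simp only [Set.mem_univ, true_iff, Set.mem_setOf_eq]
  exact ⟨fun i => i.elim0, fun A hA => absurd hA List.not_mem_nil⟩

lemma pp_inter {k : ℕ} (Γ : Set ((l : ℕ) × Set (Fin l → D)))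
    (R₁ R₂ : Set (Fin k → D)) (h₁ : ppDefinable Γ R₁) (h₂ : ppDefinable Γ R₂) :
    ppDefinable Γ (R₁ ∩ R₂) := by
  obtain ⟨m₁, C₁, hC₁, rfl⟩ := h₁
  obtain ⟨m₂, C₂, hC₂, rfl⟩ := h₂
  refine ⟨m₁ + m₂,
    C₁.map (remapAtom (Sum.map id (Fin.castAdd m₂))) ++
      C₂.map (remapAtom (Sum.map id (Fin.natAdd m₁))), ?_, ?_⟩
  · intro A hA
    rcases List.mem_append.mp hA with h | h <;>
      · obtain ⟨A₀, h₀, rfl⟩ := List.mem_map.mp h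
        first
        | exact remapAtom_overLang Γ _ _ (hC₁ _ h₀)
        | exact remapAtom_overLang Γ _ _ (hC₂ _ h₀)
  · ext a
    simp only [Set.mem_inter_iff, Set.mem_setOf_eq]
    constructor
    · rintro ⟨⟨b₁, hb₁⟩, ⟨b₂, hb₂⟩⟩
      refine ⟨Fin.append b₁ b₂, ?_⟩
      intro A' hA'
      rcases List.mem_append.mp hA' with h | h
      · obtain ⟨A, hA, rfl⟩ := List.mem_map.mp h
        exact (sat_remapAtom (Sum.map id (Fin.castAdd m₂)) A a (Fin.append b₁ b₂) a b₁
          (by rintro (v | v) <;> simp)).mpr (hb₁ _ hA)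
      · obtain ⟨A, hA, rfl⟩ := List.mem_map.mp h
        exact (sat_remapAtom (Sum.map id (Fin.natAdd m₁)) A a (Fin.append b₁ b₂) a b₂
          (by rintro (v | v) <;> simp)).mpr (hb₂ _ hA)
    · rintro ⟨b, hb⟩
      constructor
      · refine ⟨fun i => b (Fin.castAdd m₂ i), fun A hA => ?_⟩
        exact (sat_remapAtom (Sum.map id (Fin.castAdd m₂)) A a b a
          (fun i => b (Fin.castAdd m₂ i)) (by rintro (v | v) <;> rfl)).mp
          (hb _ (List.mem_append_left _ (List.mem_map_of_mem hA)))
      · refine ⟨fun i => b (Fin.natAdd m₁ i), fun A hA => ?_⟩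
        exact (sat_remapAtom (Sum.map id (Fin.natAdd m₁)) A a b a
          (fun i => b (Fin.natAdd m₁ i)) (by rintro (v | v) <;> rfl)).mp
          (hb _ (List.mem_append_right _ (List.mem_map_of_mem hA)))

lemma pp_iInter {k : ℕ} (Γ : Set ((l : ℕ) × Set (Fin l → D))) :
    ∀ (n : ℕ) (S : Fin n → Set (Fin k → D)), (∀ i, ppDefinable Γ (S i)) →
      ppDefinable Γ (⋂ i, S i)
  | 0, S, _ => by
      have : (⋂ i, S i) = Set.univ := by
        ext a; simp
      rw [this]; exact pp_univ Γ
  | n + 1, S, h => by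
      have : (⋂ i, S i) = S 0 ∩ ⋂ i : Fin n, S i.succ := by
        ext a
        simp only [Set.mem_iInter, Set.mem_inter_iff]
        constructor
        · exact fun ha => ⟨ha 0, fun i => ha i.succ⟩
        · rintro ⟨h0, hs⟩ i
          induction i using Fin.cases with
          | zero => exact h0
          | succ i => exact hs i
      rw [this]
      exact pp_inter Γ _ _ (h 0) (pp_iInter Γ n _ fun i => h i.succ)

lemma pp_exists {k : ℕ} (Γ : Set ((l : ℕ) × Set (Fin l → D)))
    (R : Set (Fin (k + 1) → D)) (h : ppDefinable Γ R) :
    ppDefinable Γ {a : Fin k → D | ∃ x, Fin.snoc a x ∈ R} := by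
  obtain ⟨m, C, hC, rfl⟩ := h
  refine ⟨m + 1, C.map (remapAtom (Sum.elim
      (fun j => Fin.lastCases (Sum.inr (Fin.last m)) (fun j' => Sum.inl j') j)
      (fun i => Sum.inr i.castSucc))), ?_, ?_⟩
  · intro A hA
    obtain ⟨A₀, h₀, rfl⟩ := List.mem_map.mp hA
    exact remapAtom_overLang Γ _ _ (hC _ h₀)
  · ext a
    simp only [Set.mem_setOf_eq]
    constructor
    · rintro ⟨x, b₀, hb⟩
      refine ⟨Fin.snoc b₀ x, ?_⟩
      rintro A' hA'
      obtain ⟨A, hA, rfl⟩ := List.mem_map.mp hA'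
      refine (sat_remapAtom _ A a (Fin.snoc b₀ x) (Fin.snoc a x) b₀ ?_).mpr (hb _ hA)
      rintro (j | i)
      · induction j using Fin.lastCases with
        | last => simp
        | cast j' => simp
      · simp
    · rintro ⟨b, hb⟩
      refine ⟨b (Fin.last m), fun i => b i.castSucc, fun A hA => ?_⟩
      refine (sat_remapAtom _ A a b (Fin.snoc a (b (Fin.last m)))
        (fun i => b i.castSucc) ?_).mp (hb _ (List.mem_map_of_mem hA))
      rintro (j | i)
      · induction j using Fin.lastCases with
        | last => simp
        | cast j' => simp
      · rfl

lemma quantSem_congr : ∀ (m : ℕ) (Q : Fin m → Bool) (P P' : (Fin m → D) → Prop),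
    (∀ b, P b ↔ P' b) → (quantSem m Q P ↔ quantSem m Q P')
  | 0, _, P, P', h => h _
  | m + 1, Q, P, P', h => by
      simp only [quantSem]
      split
      · exact forall_congr' fun x => quantSem_congr m _ _ _ fun b => h _
      · exact exists_congr fun x => quantSem_congr m _ _ _ fun b => h _

/-- variable map for peeling the first quantified variable into a free one. -/
def ρpeel (k m : ℕ) : Fin k ⊕ Fin (m + 1) → Fin (k + 1) ⊕ Fin m :=
  Sum.elim (fun j => Sum.inl j.castSucc)
    (fun i => Fin.cases (Sum.inl (Fin.last k)) (fun i' => Sum.inr i') i)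

lemma ρpeel_spec {k m : ℕ} (a : Fin k → D) (x : D) (b : Fin m → D) :
    ∀ v, Sum.elim (Fin.snoc a x) b (ρpeel k m v) = Sum.elim a (Fin.cons x b) v := by
  rintro (j | i)
  · simp [ρpeel]
  · induction i using Fin.cases with
    | zero => simp [ρpeel]
    | succ i' => simp [ρpeel]

/-- variable map for the existential case. -/
def σe (k d : ℕ) : Fin (k + 1 + d) → Fin (k + d + 1) :=
  Fin.addCases (motive := fun _ => Fin (k + d + 1))
    (fun j : Fin (k + 1) =>
      Fin.lastCases (Fin.last (k + d)) (fun j' : Fin k => (j'.castAdd d).castSucc) j)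
    (fun j : Fin d => (Fin.natAdd k j).castSucc)

lemma eval_σe {k d : ℕ} (a : Fin k → D) (b : Fin d → D) (x : D) :
    (fun i => (Fin.snoc (Fin.append a b) x : Fin (k + d + 1) → D) (σe k d i)) =
      Fin.append (Fin.snoc a x) b := by
  funext i
  induction i using Fin.addCases with
  | left j =>
    induction j using Fin.lastCases with
    | last => simp [σe]
    | cast j' => simp [σe]
  | right j => simp only [σe, Fin.addCases_right, Fin.snoc_castSucc, Fin.append_right]

/-- variable map for the universal case. -/
def σu (k d : ℕ) (i : Fin d) : Fin (k + 1 + d) → Fin (k + d) :=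
  Fin.addCases (motive := fun _ => Fin (k + d))
    (fun j : Fin (k + 1) =>
      Fin.lastCases (Fin.natAdd k i) (fun j' : Fin k => j'.castAdd d) j)
    (fun j : Fin d => Fin.natAdd k j)

lemma eval_σu {k d : ℕ} (a : Fin k → D) (b : Fin d → D) (i : Fin d) :
    (fun j => Fin.append a b (σu k d i j)) = Fin.append (Fin.snoc a (b i)) b := by
  funext j
  induction j using Fin.addCases with
  | left j0 =>
    induction j0 using Fin.lastCases with
    | last => simp [σu]
    | cast j' => simp [σu]
  | right j0 => simp [σu]

theorem key {D : Type*} [Fintype D] [Nonempty D]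
    (Γ : Set ((l : ℕ) × Set (Fin l → D))) :
    ∀ (m k : ℕ) (Q : Fin m → Bool) (C : List (Atom D k m)),
      (∀ A ∈ C, Atom.OverLang Γ A) →
      ∃ R' : Set (Fin (k + Fintype.card D) → D),
        ppDefinable Γ R' ∧
        (∀ (a : Fin k → D) (b b' : Fin (Fintype.card D) → D),
          Set.range b' ⊆ Set.range b →
          Fin.append a b ∈ R' → Fin.append a b' ∈ R') ∧
        (∀ (a : Fin k → D) (b : Fin (Fintype.card D) → D),
          Set.range b = Set.univ →
          (quantSem m Q (fun b0 => ∀ A ∈ C, A.Sat a b0) ↔ Fin.append a b ∈ R')) := by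
  intro m
  induction m with
  | zero =>
    intro k Q C hC
    set d := Fintype.card D with hd
    refine ⟨{c : Fin (k + d) → D |
      (fun i => c (Fin.castAdd d i)) ∈ {a | ∀ A ∈ C, A.Sat a (fun i => i.elim0)}},
      ?_, ?_, ?_⟩
    · refine pp_comap Γ _ ⟨0, C, hC, ?_⟩ _
      ext a
      simp only [Set.mem_setOf_eq]
      constructor
      · exact fun h => ⟨fun i => i.elim0, h⟩
      · rintro ⟨b, hb⟩ A hA
        have hb0 : b = fun i => i.elim0 := funext fun i => i.elim0
        rw [← hb0]; exact hb A hA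
    · intro a b b' _ h
      simp only [Set.mem_setOf_eq] at h ⊢
      have e : ∀ (b0 : Fin d → D), (fun i => Fin.append a b0 (Fin.castAdd d i)) = a := by
        intro b0; funext i; simp
      rw [e] at h; rw [e]; exact h
    · intro a b _
      have e : (fun i => Fin.append a b (Fin.castAdd d i)) = a := by
        funext i; simp
      simp only [Set.mem_setOf_eq, e, quantSem]
  | succ m ih =>
    intro k Q C hC
    set d := Fintype.card D with hd
    have hC'lang : ∀ A ∈ C.map (remapAtom (ρpeel k m)), A.OverLang Γ := by
      intro A hA
      obtain ⟨A₀, h₀, rfl⟩ := List.mem_map.mp hA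
      exact remapAtom_overLang Γ _ _ (hC _ h₀)
    obtain ⟨R₁', hpp, hmono, hexpr⟩ := ih (k + 1) (fun i => Q i.succ)
      (C.map (remapAtom (ρpeel k m))) hC'lang
    have hsat : ∀ (a : Fin k → D) (x : D) (b : Fin m → D),
        (∀ A ∈ C.map (remapAtom (ρpeel k m)), A.Sat (Fin.snoc a x) b) ↔
          (∀ A ∈ C, A.Sat a (Fin.cons x b)) := by
      intro a x b
      constructor
      · intro h A hA
        exact (sat_remapAtom _ _ _ _ _ _ (ρpeel_spec a x b)).mp
          (h _ (List.mem_map_of_mem hA))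
      · rintro h A' hA'
        obtain ⟨A, hA, rfl⟩ := List.mem_map.mp hA'
        exact (sat_remapAtom _ _ _ _ _ _ (ρpeel_spec a x b)).mpr (h A hA)
    have hR : ∀ a : Fin k → D,
        quantSem (m + 1) Q (fun b0 => ∀ A ∈ C, A.Sat a b0) ↔
        (if Q 0 = true then
          ∀ x : D, quantSem m (fun i => Q i.succ)
            (fun b => ∀ A ∈ C.map (remapAtom (ρpeel k m)), A.Sat (Fin.snoc a x) b)
        else
          ∃ x : D, quantSem m (fun i => Q i.succ)
            (fun b => ∀ A ∈ C.map (remapAtom (ρpeel k m)), A.Sat (Fin.snoc a x) b)) := by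
      intro a
      simp only [quantSem]
      split
      · exact forall_congr' fun x =>
          quantSem_congr m _ _ _ fun b => (hsat a x b).symm
      · exact exists_congr fun x =>
          quantSem_congr m _ _ _ fun b => (hsat a x b).symm
    by_cases hQ : Q 0 = true
    · -- universal case
      refine ⟨⋂ i : Fin d, {c : Fin (k + d) → D | (fun j => c (σu k d i j)) ∈ R₁'},
        ?_, ?_, ?_⟩
      · exact pp_iInter Γ d _ fun i => pp_comap Γ _ hpp _
      · intro a b b' hsub h
        simp only [Set.mem_iInter, Set.mem_setOf_eq, eval_σu] at h ⊢
        intro i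
        obtain ⟨j, hj⟩ := hsub ⟨i, rfl⟩
        have := hmono (Fin.snoc a (b j)) b b' hsub (h j)
        rwa [hj] at this
      · intro a b hb
        rw [hR a]
        simp only [hQ, if_true]
        simp only [Set.mem_iInter, Set.mem_setOf_eq, eval_σu]
        constructor
        · intro h i
          exact (hexpr (Fin.snoc a (b i)) b hb).mp (h (b i))
        · intro h x
          obtain ⟨i, hi⟩ : x ∈ Set.range b := hb ▸ Set.mem_univ x
          have := (hexpr (Fin.snoc a (b i)) b hb).mpr (h i)
          rwa [hi] at this
    · -- existential case
      refine ⟨{c : Fin (k + d) → D | ∃ x,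
          Fin.snoc c x ∈ {c' : Fin (k + d + 1) → D | (fun i => c' (σe k d i)) ∈ R₁'}},
        ?_, ?_, ?_⟩
      · exact pp_exists Γ _ (pp_comap Γ _ hpp _)
      · intro a b b' hsub h
        simp only [Set.mem_setOf_eq, eval_σe] at h ⊢
        obtain ⟨x, hx⟩ := h
        exact ⟨x, hmono (Fin.snoc a x) b b' hsub hx⟩
      · intro a b hb
        rw [hR a]
        simp only [hQ, if_false]
        simp only [Set.mem_setOf_eq, eval_σe]
        exact exists_congr fun x => hexpr (Fin.snoc a x) b hb

end SpreadAux


/-- (Spread expression) Let `Γ` be a constraint language over a finite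
nonempty domain `D` of size `d`.  For every `k`-ary relation `R` few-definable
from `Γ` there is a pp-definable relation `R' ⊆ D^(k+d)` spread-expressing `R`:
(monotonicity) if the set of values `{b'₁,…,b'_d}` is contained in
`{b₁,…,b_d}`, then `R'(a, b₁,…,b_d)` implies `R'(a, b'₁,…,b'_d)`; and
(expression) if `{b₁,…,b_d} = D`, then `R(a) ↔ R'(a, b₁,…,b_d)`. -/
theorem spread_expression {D : Type*} [Fintype D] [Nonempty D]
    (Γ : Set ((l : ℕ) × Set (Fin l → D))) {k : ℕ} (R : Set (Fin k → D))
    (hR : fewDefinable Γ R) :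
    ∃ R' : Set (Fin (k + Fintype.card D) → D),
      ppDefinable Γ R' ∧
      (∀ (a : Fin k → D) (b b' : Fin (Fintype.card D) → D),
        Set.range b' ⊆ Set.range b →
        Fin.append a b ∈ R' → Fin.append a b' ∈ R') ∧
      (∀ (a : Fin k → D) (b : Fin (Fintype.card D) → D),
        Set.range b = Set.univ → (a ∈ R ↔ Fin.append a b ∈ R')) := by
  obtain ⟨m, Q, C, hC, rfl⟩ := hR
  obtain ⟨R', h1, h2, h3⟩ := SpreadAux.key Γ m k Q C hC
  exact ⟨R', h1, h2, fun a b hb => h3 a b hb⟩
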